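/- Let A be an n×m complex matrix, X an n×p matrix, Y an m×q matrix, and M := A⁺ − A⁺ X (Yᴴ A⁺ X)⁺ Yᴴ A⁺. Then M = A⁺ if and only if Yᴴ A⁺ X = 0, equivalently if and only if the subspace (A⁺)ᴴ·im(Y) is orthogonal to im(X). -/

import Mathlib

open Matrix
open scoped InnerProductSpace

def IsMPInv {m n : Type*} [Fintype m] [Fintype n] (A : Matrix m n ℂ) (Z : Matrix n m ℂ) : Prop :=
  A * Z * A = A ∧ Z * A * Z = Z ∧ (A * Z)ᴴ = A * Z ∧ (Z * A)ᴴ = Z * A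

lemma inner_key {n m p q : ℕ}
    (X : Matrix (Fin n) (Fin p) ℂ) (Y : Matrix (Fin m) (Fin q) ℂ)
    (Ap : Matrix (Fin m) (Fin n) ℂ) (a : Fin q → ℂ) (b : Fin p → ℂ) :
    ⟪(Matrix.toEuclideanLin Apᴴ) ((Matrix.toEuclideanLin Y) ((WithLp.equiv 2 _).symm a)),
      (Matrix.toEuclideanLin X) ((WithLp.equiv 2 _).symm b)⟫_ℂ =
      star a ⬝ᵥ ((Yᴴ * Ap * X) *ᵥ b) := by
  change (X *ᵥ b) ⬝ᵥ star (Apᴴ *ᵥ (Y *ᵥ a)) = _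
  rw [dotProduct_comm]
  rw [Matrix.star_mulVec, Matrix.star_mulVec, conjTranspose_conjTranspose,
    Matrix.dotProduct_mulVec, Matrix.vecMul_vecMul, Matrix.vecMul_vecMul,
    ← Matrix.dotProduct_mulVec, ← Matrix.mul_assoc]

/-- `M = A⁺` iff `Yᴴ A⁺ X = 0`, iff `(A⁺)ᴴ·im(Y) ⟂ im(X)`. -/
theorem stmt5 {n m p q : ℕ}
    (A : Matrix (Fin n) (Fin m) ℂ) (X : Matrix (Fin n) (Fin p) ℂ)
    (Y : Matrix (Fin m) (Fin q) ℂ) (Ap : Matrix (Fin m) (Fin n) ℂ)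
    (hAp : IsMPInv A Ap)
    (Fp : Matrix (Fin p) (Fin q) ℂ) (hFp : IsMPInv (Yᴴ * Ap * X) Fp)
    (M : Matrix (Fin m) (Fin n) ℂ) (hM : M = Ap - Ap * X * Fp * Yᴴ * Ap) :
    (M = Ap ↔ Yᴴ * Ap * X = 0) ∧
    (M = Ap ↔ ∀ u ∈ Submodule.map (Matrix.toEuclideanLin Apᴴ)
          (LinearMap.range (Matrix.toEuclideanLin Y)),
        ∀ v ∈ LinearMap.range (Matrix.toEuclideanLin X), ⟪u, v⟫_ℂ = 0) := by
  have h1 : M = Ap ↔ Yᴴ * Ap * X = 0 := by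
    constructor
    · intro h
      have h0 : Ap * X * Fp * Yᴴ * Ap = 0 := by
        have := hM.symm.trans h
        rw [sub_eq_self] at this
        exact this
      have h2 : Yᴴ * (Ap * X * Fp * Yᴴ * Ap) * X = 0 := by rw [h0]; simp
      have h3 : (Yᴴ * Ap * X) * Fp * (Yᴴ * Ap * X) = 0 := by
        rw [← h2]; simp only [Matrix.mul_assoc]
      rw [hFp.1] at h3
      exact h3
    · intro h
      have hF0 : Fp = 0 := by
        have := hFp.2.1
        rw [h] at this
        simpa using this.symm
      rw [hM, hF0]
      simp
  refine ⟨h1, h1.trans ?_⟩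
  constructor
  · intro h u hu v hv
    obtain ⟨w, ⟨a, ha⟩, hw⟩ := hu
    obtain ⟨b, hb⟩ := hv
    have := inner_key X Y Ap (WithLp.equiv 2 _ a) (WithLp.equiv 2 _ b)
    simp only [Equiv.symm_apply_apply] at this
    rw [ha] at this
    rw [← hw, ← hb, this, h]
    simp
  · intro h
    ext i j
    have := h ((Matrix.toEuclideanLin Apᴴ) ((Matrix.toEuclideanLin Y)
        ((WithLp.equiv 2 _).symm (Pi.single i 1))))
      ⟨_, ⟨_, rfl⟩, rfl⟩
      ((Matrix.toEuclideanLin X) ((WithLp.equiv 2 _).symm (Pi.single j 1))) ⟨_, rfl⟩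
    rw [inner_key] at this
    have hstar : star (Pi.single i 1 : Fin q → ℂ) = Pi.single i 1 := by
      ext k; by_cases hk : k = i <;> simp [hk, Pi.single_apply]
    rw [hstar] at this
    simpa [dotProduct, Matrix.mulVec, Pi.single_apply, Finset.sum_ite_eq,
      eq_comm] using this
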